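/- arXiv:1109.1077 — 2 statements merged into one kernel-verified Lean document; each statement's English description precedes it below -/
import Mathlib

section
/- Let (Ω, μ) be a probability space, ι a nonempty finite index type with n = |ι|, and X : ι → Ω → ℝ random variables with |X(i)| ≤ M almost surely for all i, for some M ≥ 0. Let dist : ι → ι → ℕ be a function and α : ℕ → ℝ a nonnegative function such that: (a) |Cov(X(i), X(j))| ≤ α(dist(i,j)) whenever dist(i,j) ≥ 1; (b) for each i, the number of indices j with dist(i,j) = 0 is at most K; (c) for each i and each k ≥ 1, the number of indices j with dist(i,j) = k is at most C·k^{ρ-1}, where ρ ≥ 1 is a real constant; and (d) the series A = ∑_{k=1}^∞ α(k)·k^{ρ-1} converges. Then Var((1/n)·∑_{i ∈ ι} X(i)) ≤ (4·K·M² + C·A)/n. -/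
open MeasureTheory ProbabilityTheory

/-- The covariance `Cov(X, Y) = E[(X - E[X])·(Y - E[Y])]` of two real-valued
random variables on a measure space. -/
noncomputable def cov {Ω : Type*} [MeasurableSpace Ω] (μ : Measure Ω)
    (X Y : Ω → ℝ) : ℝ :=
  ∫ ω, (X ω - ∫ x, X x ∂μ) * (Y ω - ∫ x, Y x ∂μ) ∂μ

/-- Abstract variance-convergence lemma: for bounded random variables indexed
by a finite nonempty type, with covariances controlled by a mixing coefficient
`α` of a distance `dist` on the indices, at most `K` indices at distance `0`
from any index, at most `C·k^{ρ-1}` indices at distance `k ≥ 1`, and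
`A = ∑_{k≥1} α(k)·k^{ρ-1}` finite, the variance of the average is at most
`(4·K·M² + C·A)/n`. -/
theorem stmt_5 {Ω : Type*} [MeasurableSpace Ω] (μ : Measure Ω)
    [IsProbabilityMeasure μ] {ι : Type*} [Fintype ι] [Nonempty ι]
    (n : ℕ) (hn : n = Fintype.card ι)
    (X : ι → Ω → ℝ) (hXm : ∀ i, AEStronglyMeasurable (X i) μ)
    (M : ℝ) (hM : 0 ≤ M) (hXb : ∀ i, ∀ᵐ ω ∂μ, |X i ω| ≤ M)
    (dist : ι → ι → ℕ) (α : ℕ → ℝ) (hα : ∀ k, 0 ≤ α k)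
    (K : ℕ) (C ρ : ℝ) (hC : 0 ≤ C) (hρ : 1 ≤ ρ) (A : ℝ)
    (ha : ∀ i j, 1 ≤ dist i j → |cov μ (X i) (X j)| ≤ α (dist i j))
    (hb : ∀ i, (Finset.univ.filter (fun j => dist i j = 0)).card ≤ K)
    (hc : ∀ i, ∀ k : ℕ, 1 ≤ k →
      ((Finset.univ.filter (fun j => dist i j = k)).card : ℝ) ≤ C * (k : ℝ) ^ (ρ - 1))
    (hd : HasSum (fun k : ℕ => α (k + 1) * ((k + 1 : ℕ) : ℝ) ^ (ρ - 1)) A) :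
    variance (fun ω => (1 / n : ℝ) * ∑ i, X i ω) μ ≤ (4 * K * M ^ 2 + C * A) / n := by
  classical
  have hn1 : 0 < n := hn ▸ Fintype.card_pos
  set Y : ι → Ω → ℝ := fun i ω => X i ω - ∫ x, X i x ∂μ with hY
  -- basic measurability / boundedness
  have hXmem : ∀ i, MemLp (X i) ⊤ μ := fun i =>
    memLp_top_of_bound (hXm i) M (by simpa [Real.norm_eq_abs] using hXb i)
  have hXint : ∀ i, Integrable (X i) μ := fun i => (hXmem i).integrable le_top
  have hmean : ∀ i, |∫ x, X i x ∂μ| ≤ M := by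
    intro i
    calc |∫ x, X i x ∂μ| ≤ M * (μ Set.univ).toReal := by
          simpa [Real.norm_eq_abs] using
            norm_integral_le_of_norm_le_const (μ := μ) (f := X i) (C := M)
              (by simpa [Real.norm_eq_abs] using hXb i)
      _ = M := by simp
  have hYm : ∀ i, AEStronglyMeasurable (Y i) μ := fun i =>
    (hXm i).sub aestronglyMeasurable_const
  have hYb : ∀ i, ∀ᵐ ω ∂μ, |Y i ω| ≤ 2 * M := by
    intro i
    filter_upwards [hXb i] with ω hω
    calc |Y i ω| ≤ |X i ω| + |∫ x, X i x ∂μ| := abs_sub _ _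
      _ ≤ M + M := add_le_add hω (hmean i)
      _ = 2 * M := by ring
  have hYYint : ∀ i j, Integrable (fun ω => Y i ω * Y j ω) μ := by
    intro i j
    refine (memLp_top_of_bound ((hYm i).mul (hYm j)) (4 * M ^ 2) ?_).integrable le_top
    filter_upwards [hYb i, hYb j] with ω h1 h2
    simp only [Real.norm_eq_abs, Pi.mul_apply, abs_mul]
    calc |Y i ω| * |Y j ω| ≤ (2 * M) * (2 * M) :=
          mul_le_mul h1 h2 (abs_nonneg _) (by linarith [abs_nonneg (Y i ω)])
      _ = 4 * M ^ 2 := by ring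
  have hcov_eq : ∀ i j, cov μ (X i) (X j) = ∫ ω, Y i ω * Y j ω ∂μ := fun i j => rfl
  have hcov_bound : ∀ i j, |cov μ (X i) (X j)| ≤ 4 * M ^ 2 := by
    intro i j
    rw [hcov_eq]
    calc |∫ ω, Y i ω * Y j ω ∂μ| ≤ (4 * M ^ 2) * (μ Set.univ).toReal := by
          refine (Real.norm_eq_abs _) ▸ norm_integral_le_of_norm_le_const ?_
          filter_upwards [hYb i, hYb j] with ω h1 h2
          rw [Real.norm_eq_abs, abs_mul]
          calc |Y i ω| * |Y j ω| ≤ (2 * M) * (2 * M) :=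
                mul_le_mul h1 h2 (abs_nonneg _) (by linarith [abs_nonneg (Y i ω)])
            _ = 4 * M ^ 2 := by ring
      _ = 4 * M ^ 2 := by simp
  -- key counting bound: partial sums of the series are ≤ A
  have hsum_le : ∀ s : Finset ℕ, (∀ k ∈ s, 1 ≤ k) →
      ∑ k ∈ s, α k * (k : ℝ) ^ (ρ - 1) ≤ A := by
    intro s hs
    have hinj : ∀ x ∈ s, ∀ y ∈ s, x - 1 = y - 1 → x = y := by
      intro x hx y hy h
      have := hs x hx; have := hs y hy; omega
    have : ∑ m ∈ s.image (· - 1), α (m + 1) * ((m + 1 : ℕ) : ℝ) ^ (ρ - 1)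
        = ∑ k ∈ s, α k * (k : ℝ) ^ (ρ - 1) := by
      rw [Finset.sum_image hinj]
      refine Finset.sum_congr rfl fun k hk => ?_
      have hk1 := hs k hk
      have : k - 1 + 1 = k := by omega
      rw [this]
    rw [← this]
    refine sum_le_hasSum _ (fun m _ => ?_) hd
    exact mul_nonneg (hα _) (Real.rpow_nonneg (by positivity) _)
  -- per-index bound on the covariance row sum
  have hrow : ∀ i, ∑ j, |cov μ (X i) (X j)| ≤ 4 * K * M ^ 2 + C * A := by
    intro i
    rw [← Finset.sum_filter_add_sum_filter_not Finset.univ (fun j => dist i j = 0)]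
    have h0 : ∑ j ∈ Finset.univ.filter (fun j => dist i j = 0), |cov μ (X i) (X j)|
        ≤ 4 * K * M ^ 2 := by
      calc ∑ j ∈ Finset.univ.filter (fun j => dist i j = 0), |cov μ (X i) (X j)|
          ≤ ∑ _j ∈ Finset.univ.filter (fun j => dist i j = 0), 4 * M ^ 2 :=
            Finset.sum_le_sum fun j _ => hcov_bound i j
        _ = ((Finset.univ.filter (fun j => dist i j = 0)).card : ℝ) * (4 * M ^ 2) := by
            rw [Finset.sum_const, nsmul_eq_mul]
        _ ≤ (K : ℝ) * (4 * M ^ 2) := by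
            apply mul_le_mul_of_nonneg_right _ (by positivity)
            exact_mod_cast hb i
        _ = 4 * K * M ^ 2 := by ring
    have h1 : ∑ j ∈ Finset.univ.filter (fun j => ¬dist i j = 0), |cov μ (X i) (X j)|
        ≤ C * A := by
      set F := Finset.univ.filter (fun j => ¬dist i j = 0) with hF
      have step1 : ∑ j ∈ F, |cov μ (X i) (X j)| ≤ ∑ j ∈ F, α (dist i j) := by
        refine Finset.sum_le_sum fun j hj => ?_
        have : ¬ dist i j = 0 := (Finset.mem_filter.mp hj).2
        exact ha i j (by omega)
      have step2 : ∑ j ∈ F, α (dist i j)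
          = ∑ k ∈ F.image (dist i), ((F.filter (fun j => dist i j = k)).card) • α k :=
        Finset.sum_comp α (dist i)
      have step3 : ∑ k ∈ F.image (dist i), ((F.filter (fun j => dist i j = k)).card) • α k
          ≤ ∑ k ∈ F.image (dist i), C * (α k * (k : ℝ) ^ (ρ - 1)) := by
        refine Finset.sum_le_sum fun k hk => ?_
        obtain ⟨j, hjF, hjk⟩ := Finset.mem_image.mp hk
        have hk1 : 1 ≤ k := by
          have : ¬ dist i j = 0 := (Finset.mem_filter.mp hjF).2
          omega
        have hcard : ((F.filter (fun j => dist i j = k)).card : ℝ)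
            ≤ C * (k : ℝ) ^ (ρ - 1) := by
          refine le_trans ?_ (hc i k hk1)
          exact_mod_cast Nat.cast_le.mpr (Finset.card_le_card
            (Finset.filter_subset_filter _ (Finset.filter_subset _ _)))
        calc ((F.filter (fun j => dist i j = k)).card) • α k
            = ((F.filter (fun j => dist i j = k)).card : ℝ) * α k := nsmul_eq_mul _ _
          _ ≤ (C * (k : ℝ) ^ (ρ - 1)) * α k :=
              mul_le_mul_of_nonneg_right hcard (hα k)
          _ = C * (α k * (k : ℝ) ^ (ρ - 1)) := by ring
      have step4 : ∑ k ∈ F.image (dist i), C * (α k * (k : ℝ) ^ (ρ - 1)) ≤ C * A := by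
        rw [← Finset.mul_sum]
        refine mul_le_mul_of_nonneg_left ?_ hC
        refine hsum_le _ fun k hk => ?_
        obtain ⟨j, hjF, hjk⟩ := Finset.mem_image.mp hk
        have : ¬ dist i j = 0 := (Finset.mem_filter.mp hjF).2
        omega
      linarith
    linarith
  -- variance expansion
  set S : Ω → ℝ := fun ω => ∑ i, X i ω with hS
  have hSmem : MemLp S 2 μ := by
    refine (memLp_top_of_bound ?_ ((Fintype.card ι : ℝ) * M) ?_).mono_exponent le_top
    · exact Finset.aestronglyMeasurable_fun_sum _ fun i _ => hXm i
    · have := ae_all_iff.mpr hXb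
      filter_upwards [this] with ω hω
      calc ‖S ω‖ = |∑ i, X i ω| := rfl
        _ ≤ ∑ i, |X i ω| := Finset.abs_sum_le_sum_abs _ _
        _ ≤ ∑ _i : ι, M := Finset.sum_le_sum fun i _ => hω i
        _ = (Fintype.card ι : ℝ) * M := by
            rw [Finset.sum_const, nsmul_eq_mul]; simp
  have hSint : ∫ x, S x ∂μ = ∑ i, ∫ x, X i x ∂μ := integral_finset_sum _ fun i _ => hXint i
  have hvarS : variance S μ = ∑ i, ∑ j, cov μ (X i) (X j) := by
    rw [show variance S μ = μ[((S - fun _ => μ[S]) ^ (2:ℕ) : Ω → ℝ)] from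
      variance_eq_integral hSmem.aestronglyMeasurable.aemeasurable]
    have : ((S - fun _ => ∫ x, S x ∂μ) ^ (2:ℕ) : Ω → ℝ)
        = fun ω => ∑ i, ∑ j, Y i ω * Y j ω := by
      funext ω
      have : S ω - ∫ x, S x ∂μ = ∑ i, Y i ω := by
        rw [hSint, ← Finset.sum_sub_distrib]
      simp only [Pi.pow_apply, Pi.sub_apply]
      rw [this, sq, Finset.sum_mul_sum]
    rw [this, integral_finset_sum _ fun i _ => integrable_finset_sum _ fun j _ => hYYint i j]
    exact Finset.sum_congr rfl fun i _ => by
      rw [integral_finset_sum _ fun j _ => hYYint i j]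
      exact Finset.sum_congr rfl fun j _ => (hcov_eq i j).symm
  have hvarS_le : variance S μ ≤ n * (4 * K * M ^ 2 + C * A) := by
    rw [hvarS]
    calc ∑ i, ∑ j, cov μ (X i) (X j) ≤ ∑ i, ∑ j, |cov μ (X i) (X j)| :=
          Finset.sum_le_sum fun i _ => Finset.sum_le_sum fun j _ => le_abs_self _
      _ ≤ ∑ _i : ι, (4 * K * M ^ 2 + C * A) := Finset.sum_le_sum fun i _ => hrow i
      _ = n * (4 * K * M ^ 2 + C * A) := by
          rw [Finset.sum_const, nsmul_eq_mul, Finset.card_univ, hn]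
  have hvmul : variance (fun ω => (1 / n : ℝ) * ∑ i, X i ω) μ
      = (1 / n : ℝ) ^ 2 * variance S μ := variance_const_mul _ _ _
  rw [hvmul]
  have hnpos : (0:ℝ) < n := by exact_mod_cast hn1
  calc (1 / n : ℝ) ^ 2 * variance S μ
      ≤ (1 / n : ℝ) ^ 2 * (n * (4 * K * M ^ 2 + C * A)) :=
        mul_le_mul_of_nonneg_left hvarS_le (by positivity)
    _ = (4 * K * M ^ 2 + C * A) / n := by
        field_simp
end

section
/- Let (Ωₙ, μₙ) be a sequence of probability spaces, and for each n let ιₙ be a finite index type of cardinality n ≥ 1 and Xₙ : ιₙ → Ωₙ → ℝ random variables with |Xₙ(i)| ≤ M almost surely for all i, with M independent of n. Suppose for each n there is a function distₙ : ιₙ → ιₙ → ℕ such that: (a) |Cov(Xₙ(i), Xₙ(j))| ≤ α(distₙ(i,j)) whenever distₙ(i,j) ≥ 1, for a fixed nonnegative α : ℕ → ℝ; (b) for each i the number of j with distₙ(i,j) = 0 is at most K; (c) for each i and k ≥ 1 the number of j with distₙ(i,j) = k is at most C·k^{ρ-1} for a fixed real ρ ≥ 1; and (d) ∑_{k=1}^∞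 α(k)·k^{ρ-1} converges. Then Var((1/n)·∑_{i ∈ ιₙ} Xₙ(i)) tends to 0 as n → ∞. -/
open MeasureTheory ProbabilityTheory Filter Topology

lemma var_bound {Ω : Type*} [MeasurableSpace Ω] (μ : Measure Ω)
    [IsProbabilityMeasure μ] {ι : Type*} [Fintype ι]
    (n : ℕ) (hn : 1 ≤ n) (hcard : Fintype.card ι = n)
    (X : ι → Ω → ℝ) (hXm : ∀ i, AEStronglyMeasurable (X i) μ)
    (M : ℝ) (hM : 0 ≤ M) (hXb : ∀ i, ∀ᵐ ω ∂μ, |X i ω| ≤ M)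
    (dist : ι → ι → ℕ) (α : ℕ → ℝ) (hα : ∀ k, 0 ≤ α k)
    (K : ℕ) (C ρ : ℝ) (hC : 0 ≤ C) (hρ : 1 ≤ ρ)
    (ha : ∀ i j, 1 ≤ dist i j → |cov μ (X i) (X j)| ≤ α (dist i j))
    (hb : ∀ i, (Finset.univ.filter (fun j => dist i j = 0)).card ≤ K)
    (hc : ∀ i, ∀ k : ℕ, 1 ≤ k →
      ((Finset.univ.filter (fun j => dist i j = k)).card : ℝ) ≤ C * (k : ℝ) ^ (ρ - 1))
    (hd : Summable (fun k : ℕ => α (k + 1) * ((k + 1 : ℕ) : ℝ) ^ (ρ - 1))) :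
    variance (fun ω => (1 / (n : ℝ)) * ∑ i, X i ω) μ ≤
      (4 * M ^ 2 * K + C * ∑' k : ℕ, α (k + 1) * ((k + 1 : ℕ) : ℝ) ^ (ρ - 1)) / n := by
  classical
  have hn0 : (0 : ℝ) < n := by exact_mod_cast hn
  set E : ι → ℝ := fun i => ∫ ω, X i ω ∂μ with hE
  set Y : ι → Ω → ℝ := fun i ω => X i ω - E i with hY
  have hXb' : ∀ i, ∀ᵐ ω ∂μ, ‖X i ω‖ ≤ M := by
    intro i; simpa [Real.norm_eq_abs] using hXb i
  have hmem : ∀ i, MemLp (X i) 2 μ := fun i => MemLp.of_bound (hXm i) M (hXb' i)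
  have hInt : ∀ i, Integrable (X i) μ := fun i => (hmem i).integrable one_le_two
  have hEbd : ∀ i, |E i| ≤ M := by
    intro i
    have := norm_integral_le_of_norm_le_const (μ := μ) (hXb' i)
    simpa [Real.norm_eq_abs, measure_univ] using this
  have hYm : ∀ i, AEStronglyMeasurable (Y i) μ :=
    fun i => (hXm i).sub aestronglyMeasurable_const
  have hYb : ∀ i, ∀ᵐ ω ∂μ, ‖Y i ω‖ ≤ 2 * M := by
    intro i
    filter_upwards [hXb i] with ω hω
    calc ‖Y i ω‖ = |X i ω - E i| := rfl
      _ ≤ |X i ω| + |E i| := abs_sub _ _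
      _ ≤ M + M := add_le_add hω (hEbd i)
      _ = 2 * M := by ring
  have hprodb : ∀ i j, ∀ᵐ ω ∂μ, ‖Y i ω * Y j ω‖ ≤ 4 * M ^ 2 := by
    intro i j
    filter_upwards [hYb i, hYb j] with ω h1 h2
    calc ‖Y i ω * Y j ω‖ = ‖Y i ω‖ * ‖Y j ω‖ := norm_mul _ _
      _ ≤ (2 * M) * (2 * M) := mul_le_mul h1 h2 (norm_nonneg _) (by positivity)
      _ = 4 * M ^ 2 := by ring
  have hprod : ∀ i j, Integrable (fun ω => Y i ω * Y j ω) μ := by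
    intro i j
    exact memLp_one_iff_integrable.mp
      (MemLp.of_bound ((hYm i).mul (hYm j)) (4 * M ^ 2) (hprodb i j))
  have hcov : ∀ i j, cov μ (X i) (X j) = ∫ ω, Y i ω * Y j ω ∂μ := fun i j => rfl
  have hcovbd : ∀ i j, |cov μ (X i) (X j)| ≤ 4 * M ^ 2 := by
    intro i j
    rw [hcov]
    have := norm_integral_le_of_norm_le_const (μ := μ) (hprodb i j)
    simpa [Real.norm_eq_abs, measure_univ] using this
  set A : Ω → ℝ := fun ω => (1 / (n : ℝ)) * ∑ i, X i ω with hA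
  have hAmem : MemLp A 2 μ := by
    have := (memLp_finset_sum' Finset.univ (fun i (_ : i ∈ Finset.univ) => hmem i)).const_mul
      (1 / (n : ℝ))
    simpa [hA, Finset.sum_apply] using this
  have hEA : ∫ ω, A ω ∂μ = (1 / (n : ℝ)) * ∑ i, E i := by
    rw [hA]
    rw [integral_const_mul, integral_finset_sum _ (fun i _ => hInt i)]
  have hvar : variance A μ = (1 / (n : ℝ)) ^ 2 * ∑ i, ∑ j, cov μ (X i) (X j) := by
    have h2 : ∀ ω : Ω, A ω - (∫ x, A x ∂μ) = (1 / (n : ℝ)) * ∑ i, Y i ω := by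
      intro ω
      rw [hEA]
      simp only [hA, hY]
      rw [← mul_sub, ← Finset.sum_sub_distrib]
    have h1 : (A - fun _ => ∫ x, A x ∂μ) ^ (2 : ℕ)
        = fun ω => (1 / (n : ℝ)) ^ 2 * ∑ i, ∑ j, Y i ω * Y j ω := by
      funext ω
      simp only [Pi.pow_apply, Pi.sub_apply]
      rw [h2 ω, mul_pow, sq (∑ i, Y i ω), Finset.sum_mul_sum]
    rw [variance_eq_integral hAmem.aestronglyMeasurable.aemeasurable]
    change ∫ ω, (((A - fun _ => ∫ x, A x ∂μ) ^ (2 : ℕ) : Ω → ℝ)) ω ∂μ = _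
    rw [h1]
    beta_reduce
    rw [integral_const_mul,
      integral_finset_sum _ (fun i _ => integrable_finset_sum _ (fun j _ => hprod i j))]
    congr 1
    refine Finset.sum_congr rfl (fun i _ => ?_)
    rw [integral_finset_sum _ (fun j _ => hprod i j)]
    exact Finset.sum_congr rfl (fun j _ => (hcov i j).symm)
  set S : ℝ := ∑' k : ℕ, α (k + 1) * ((k + 1 : ℕ) : ℝ) ^ (ρ - 1) with hS
  have hterm : ∀ k : ℕ, 0 ≤ α (k + 1) * ((k + 1 : ℕ) : ℝ) ^ (ρ - 1) :=
    fun k => mul_nonneg (hα _) (Real.rpow_nonneg (by positivity) _)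
  have hS0 : 0 ≤ S := tsum_nonneg hterm
  have key : ∀ i, ∑ j, |cov μ (X i) (X j)| ≤ 4 * M ^ 2 * K + C * S := by
    intro i
    rw [← Finset.sum_filter_add_sum_filter_not Finset.univ (fun j => dist i j = 0)]
    have part0 : ∑ j ∈ Finset.univ.filter (fun j => dist i j = 0), |cov μ (X i) (X j)|
        ≤ 4 * M ^ 2 * K := by
      calc ∑ j ∈ Finset.univ.filter (fun j => dist i j = 0), |cov μ (X i) (X j)|
          ≤ ∑ _j ∈ Finset.univ.filter (fun j => dist i j = 0), 4 * M ^ 2 :=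
            Finset.sum_le_sum (fun j _ => hcovbd i j)
        _ = ((Finset.univ.filter (fun j => dist i j = 0)).card : ℝ) * (4 * M ^ 2) := by
            rw [Finset.sum_const, nsmul_eq_mul]
        _ ≤ (K : ℝ) * (4 * M ^ 2) := by
            have : ((Finset.univ.filter (fun j => dist i j = 0)).card : ℝ) ≤ (K : ℝ) := by
              exact_mod_cast hb i
            exact mul_le_mul_of_nonneg_right this (by positivity)
        _ = 4 * M ^ 2 * K := by ring
    have part1 : ∑ j ∈ Finset.univ.filter (fun j => ¬ dist i j = 0), |cov μ (X i) (X j)|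
        ≤ C * S := by
      set s := Finset.univ.filter (fun j => ¬ dist i j = 0) with hs
      set N := Finset.univ.sup (dist i) with hN
      have hmaps : ∀ j ∈ s, dist i j ∈ Finset.Icc 1 N := by
        intro j hj
        rw [hs, Finset.mem_filter] at hj
        exact Finset.mem_Icc.mpr
          ⟨Nat.one_le_iff_ne_zero.mpr hj.2, Finset.le_sup (Finset.mem_univ j)⟩
      calc ∑ j ∈ s, |cov μ (X i) (X j)| ≤ ∑ j ∈ s, α (dist i j) := by
            apply Finset.sum_le_sum
            intro j hj
            rw [hs, Finset.mem_filter] at hj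
            exact ha i j (Nat.one_le_iff_ne_zero.mpr hj.2)
        _ = ∑ k ∈ Finset.Icc 1 N, ∑ j ∈ s.filter (fun j => dist i j = k), α (dist i j) :=
            (Finset.sum_fiberwise_of_maps_to hmaps _).symm
        _ ≤ ∑ k ∈ Finset.Icc 1 N, C * (k : ℝ) ^ (ρ - 1) * α k := by
            apply Finset.sum_le_sum
            intro k hk
            have hk1 : 1 ≤ k := (Finset.mem_Icc.mp hk).1
            calc ∑ j ∈ s.filter (fun j => dist i j = k), α (dist i j)
                = ((s.filter (fun j => dist i j = k)).card : ℝ) * α k := by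
                  rw [Finset.sum_congr rfl (fun j hj => by rw [(Finset.mem_filter.mp hj).2]),
                    Finset.sum_const, nsmul_eq_mul]
              _ ≤ C * (k : ℝ) ^ (ρ - 1) * α k := by
                  apply mul_le_mul_of_nonneg_right _ (hα k)
                  refine le_trans ?_ (hc i k hk1)
                  have hsub : s.filter (fun j => dist i j = k) ⊆
                      Finset.univ.filter (fun j => dist i j = k) := by
                    intro j hj
                    rw [Finset.mem_filter] at hj ⊢
                    exact ⟨Finset.mem_univ j, hj.2⟩
                  exact_mod_cast Finset.card_le_card hsub
        _ = C * ∑ k ∈ Finset.Icc 1 N, α k * (k : ℝ) ^ (ρ - 1) := by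
            rw [Finset.mul_sum]
            exact Finset.sum_congr rfl (fun k _ => by ring)
        _ ≤ C * S := by
            apply mul_le_mul_of_nonneg_left _ hC
            have hIcc : Finset.Icc 1 N = Finset.Ico 1 (N + 1) := by
              rw [Finset.Ico_add_one_right_eq_Icc]
            rw [hIcc, Finset.sum_Ico_eq_sum_range]
            simp only [Nat.add_sub_cancel]
            have hle := Summable.sum_le_tsum (Finset.range N) (fun k _ => hterm k) hd
            rw [← hS] at hle
            refine le_trans (le_of_eq ?_) hle
            exact Finset.sum_congr rfl (fun k _ => by rw [add_comm 1 k])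
    exact add_le_add part0 part1
  calc variance A μ = (1 / (n : ℝ)) ^ 2 * ∑ i, ∑ j, cov μ (X i) (X j) := hvar
    _ ≤ (1 / (n : ℝ)) ^ 2 * ∑ i, ∑ j, |cov μ (X i) (X j)| := by
        apply mul_le_mul_of_nonneg_left _ (by positivity)
        exact Finset.sum_le_sum (fun i _ => Finset.sum_le_sum (fun j _ => le_abs_self _))
    _ ≤ (1 / (n : ℝ)) ^ 2 * ∑ _i : ι, (4 * M ^ 2 * K + C * S) := by
        apply mul_le_mul_of_nonneg_left _ (by positivity)
        exact Finset.sum_le_sum (fun i _ => key i)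
    _ = (4 * M ^ 2 * K + C * S) / n := by
        rw [Finset.sum_const, Finset.card_univ, hcard, nsmul_eq_mul]
        field_simp

/-- Variance-convergence lemma (Lemma 1 of the paper): for a sequence of
families of uniformly bounded random variables indexed by finite types of
cardinality `n`, with covariances controlled by a fixed mixing coefficient `α`
of a distance on the indices, at most `K` indices at distance `0` from any
index, at most `C·k^{ρ-1}` indices at distance `k ≥ 1`, and
`∑_{k≥1} α(k)·k^{ρ-1} < ∞`, the variance of the average tends to `0` as
`n → ∞`. -/
theorem stmt_6 (Ω : ℕ → Type*) [∀ n, MeasurableSpace (Ω n)]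
    (μ : ∀ n, Measure (Ω n)) [∀ n, IsProbabilityMeasure (μ n)]
    (ι : ℕ → Type*) [∀ n, Fintype (ι n)]
    (hcard : ∀ n, 1 ≤ n → Fintype.card (ι n) = n)
    (X : ∀ n, ι n → Ω n → ℝ)
    (hXm : ∀ n i, AEStronglyMeasurable (X n i) (μ n))
    (M : ℝ) (hM : 0 ≤ M) (hXb : ∀ n i, ∀ᵐ ω ∂(μ n), |X n i ω| ≤ M)
    (dist : ∀ n, ι n → ι n → ℕ) (α : ℕ → ℝ) (hα : ∀ k, 0 ≤ α k)
    (K : ℕ) (C ρ : ℝ) (hC : 0 ≤ C) (hρ : 1 ≤ ρ)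
    (ha : ∀ n i j, 1 ≤ dist n i j →
      |cov (μ n) (X n i) (X n j)| ≤ α (dist n i j))
    (hb : ∀ n i, (Finset.univ.filter (fun j => dist n i j = 0)).card ≤ K)
    (hc : ∀ n i, ∀ k : ℕ, 1 ≤ k →
      ((Finset.univ.filter (fun j => dist n i j = k)).card : ℝ) ≤
        C * (k : ℝ) ^ (ρ - 1))
    (hd : Summable (fun k : ℕ => α (k + 1) * ((k + 1 : ℕ) : ℝ) ^ (ρ - 1))) :
    Tendsto (fun n : ℕ => variance (fun ω => (1 / (n : ℝ)) * ∑ i, X n i ω) (μ n))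
      atTop (𝓝 0) := by
  apply squeeze_zero' ?_ ?_
    (tendsto_const_div_atTop_nhds_zero_nat
      (4 * M ^ 2 * K + C * ∑' k : ℕ, α (k + 1) * ((k + 1 : ℕ) : ℝ) ^ (ρ - 1)))
  · exact Filter.Eventually.of_forall fun n => variance_nonneg _ _
  · filter_upwards [eventually_ge_atTop 1] with n hn
    exact var_bound (μ n) n hn (hcard n hn) (X n) (hXm n) M hM (hXb n) (dist n)
      α hα K C ρ hC hρ (ha n) (hb n) (hc n) hd
end
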